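/- Let A ⊂ P^2 be a zero-dimensional subscheme of length 7 such that the intersection of A with any line has length ≤ 4. Then A imposes 7 independent conditions on cubics, i.e., h^0(J_A(3)) = 10 − 7 = 3. -/

import Mathlib

open MvPolynomial Finset

noncomputable section SevenPoints
noncomputable section SevenPoints

/-- Explicit 3×3 determinant of rows `a`, `b`, `c`. -/
def det3 (a b c : Fin 3 → ℂ) : ℂ :=
  a 0 * b 1 * c 2 - a 0 * b 2 * c 1 - a 1 * b 0 * c 2 + a 1 * b 2 * c 0
    + a 2 * b 0 * c 1 - a 2 * b 1 * c 0

lemma det3_self_mid (a b : Fin 3 → ℂ) : det3 a a b = 0 := by unfold det3; ring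
lemma det3_self_last (a b : Fin 3 → ℂ) : det3 a b b = 0 := by unfold det3; ring
lemma det3_self_out (a b : Fin 3 → ℂ) : det3 b a b = 0 := by unfold det3; ring
lemma det3_swap (a b c : Fin 3 → ℂ) : det3 a c b = - det3 a b c := by unfold det3; ring
lemma det3_swap_zero {a b c : Fin 3 → ℂ} (h : det3 a b c = 0) : det3 a c b = 0 := by
  rw [det3_swap, h, neg_zero]
lemma det3_cyc (a b c : Fin 3 → ℂ) : det3 c a b = det3 a b c := by unfold det3; ring

/-- Grassmann–Plücker relation. -/
lemma pluecker (p q s t x : Fin 3 → ℂ) :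
    det3 p q s * det3 p t x - det3 p q t * det3 p s x + det3 p q x * det3 p s t = 0 := by
  unfold det3; ring

lemma det3_trans {p q s t x : Fin 3 → ℂ} (h1 : det3 p q s = 0) (h2 : det3 p q t = 0)
    (hx : det3 p q x ≠ 0) : det3 p s t = 0 := by
  have hpl := pluecker p q s t x
  rw [h1, h2] at hpl
  have h3 : det3 p q x * det3 p s t = 0 := by simpa using hpl
  rcases mul_eq_zero.mp h3 with h | h
  · exact absurd h hx
  · exact h

/-- The linear form whose evaluation at `a` is `det3 a q r`. -/
def linePoly (q r : Fin 3 → ℂ) : MvPolynomial (Fin 3) ℂ :=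
  C (q 1 * r 2 - q 2 * r 1) * X 0 + C (q 2 * r 0 - q 0 * r 2) * X 1
    + C (q 0 * r 1 - q 1 * r 0) * X 2

lemma linePoly_homogeneous (q r : Fin 3 → ℂ) : (linePoly q r).IsHomogeneous 1 := by
  have h : ∀ (c : ℂ) (i : Fin 3), (C c * X i : MvPolynomial (Fin 3) ℂ).IsHomogeneous 1 := by
    intro c i
    simpa using (isHomogeneous_C (Fin 3) c).mul (isHomogeneous_X ℂ i)
  exact ((h _ 0).add (h _ 1)).add (h _ 2)

lemma eval_linePoly (a q r : Fin 3 → ℂ) : eval a (linePoly q r) = det3 a q r := by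
  simp [linePoly, det3]; ring

/-- If `p ≠ 0` and `q` is not a multiple of `p`, the cross product is nonzero. -/
lemma cross_ne_zero {p q : Fin 3 → ℂ} (hp : p ≠ 0) (h : ∀ c : ℂ, q ≠ c • p) :
    ¬ (p 1 * q 2 - p 2 * q 1 = 0 ∧ p 2 * q 0 - p 0 * q 2 = 0 ∧ p 0 * q 1 - p 1 * q 0 = 0) := by
  rintro ⟨h0, h1, h2⟩
  have hpi : ∃ i, p i ≠ 0 := by
    by_contra hc
    push_neg at hc
    exact hp (funext fun i => hc i)
  obtain ⟨i, hi⟩ := hpi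
  fin_cases i
  · have hi' : p 0 ≠ 0 := hi
    have e0 : q 0 = q 0 / p 0 * p 0 := by rw [div_mul_cancel₀ _ hi']
    have e1 : q 1 = q 0 / p 0 * p 1 := by
      rw [div_mul_eq_mul_div, eq_comm, div_eq_iff hi']; linear_combination -h2
    have e2 : q 2 = q 0 / p 0 * p 2 := by
      rw [div_mul_eq_mul_div, eq_comm, div_eq_iff hi']; linear_combination h1
    refine h (q 0 / p 0) (funext fun j => ?_)
    fin_cases j
    · exact e0
    · exact e1
    · exact e2
  · have hi' : p 1 ≠ 0 := hi
    have e0 : q 0 = q 1 / p 1 * p 0 := by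
      rw [div_mul_eq_mul_div, eq_comm, div_eq_iff hi']; linear_combination h2
    have e1 : q 1 = q 1 / p 1 * p 1 := by rw [div_mul_cancel₀ _ hi']
    have e2 : q 2 = q 1 / p 1 * p 2 := by
      rw [div_mul_eq_mul_div, eq_comm, div_eq_iff hi']; linear_combination -h0
    refine h (q 1 / p 1) (funext fun j => ?_)
    fin_cases j
    · exact e0
    · exact e1
    · exact e2
  · have hi' : p 2 ≠ 0 := hi
    have e0 : q 0 = q 2 / p 2 * p 0 := by
      rw [div_mul_eq_mul_div, eq_comm, div_eq_iff hi']; linear_combination -h1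
    have e1 : q 1 = q 2 / p 2 * p 1 := by
      rw [div_mul_eq_mul_div, eq_comm, div_eq_iff hi']; linear_combination h0
    have e2 : q 2 = q 2 / p 2 * p 2 := by rw [div_mul_cancel₀ _ hi']
    refine h (q 2 / p 2) (funext fun j => ?_)
    fin_cases j
    · exact e0
    · exact e1
    · exact e2

/-- From non-proportionality: some point where `det3 p q ·` does not vanish. -/
lemma exists_det3_ne {p q : Fin 3 → ℂ} (hp : p ≠ 0) (h : ∀ c : ℂ, q ≠ c • p) :
    ∃ x : Fin 3 → ℂ, det3 p q x ≠ 0 := by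
  have hc := cross_ne_zero hp h
  by_contra hx
  push_neg at hx
  have e2 := hx ![0, 0, 1]
  have e1 := hx ![0, 1, 0]
  have e0 := hx ![1, 0, 0]
  simp only [det3] at e0 e1 e2
  norm_num [Matrix.cons_val_two, Matrix.tail_cons, Matrix.head_cons] at e0 e1 e2
  exact hc ⟨by linear_combination e0, by linear_combination e1, by linear_combination e2⟩

lemma linePoly_ne_zero {p q : Fin 3 → ℂ} (hp : p ≠ 0) (h : ∀ c : ℂ, q ≠ c • p) :
    linePoly p q ≠ 0 := by
  obtain ⟨x, hx⟩ := exists_det3_ne hp h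
  intro h0
  apply hx
  have : eval x (linePoly p q) = 0 := by rw [h0]; simp
  rwa [eval_linePoly, det3_cyc] at this


/-- The points of `T` on the line through `p` and `q` (when `p`, `q` independent). -/
noncomputable def classOf (p : Fin 3 → ℂ) (T : Finset (Fin 3 → ℂ)) (q : Fin 3 → ℂ) :
    Finset (Fin 3 → ℂ) :=
  @Finset.filter _ (fun s => det3 p q s = 0) (fun _ => Classical.propDecidable _) T

lemma mem_classOf {p : Fin 3 → ℂ} {T : Finset (Fin 3 → ℂ)} {q s : Fin 3 → ℂ} :
    s ∈ classOf p T q ↔ s ∈ T ∧ det3 p q s = 0 :=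
  Finset.mem_filter

lemma classOf_subset {p : Fin 3 → ℂ} {T : Finset (Fin 3 → ℂ)} {q : Fin 3 → ℂ} :
    classOf p T q ⊆ T := Finset.filter_subset _ _

lemma classOf_mono {p : Fin 3 → ℂ} {T T' : Finset (Fin 3 → ℂ)} (h : T' ⊆ T) {q : Fin 3 → ℂ} :
    classOf p T' q ⊆ classOf p T q := Finset.filter_subset_filter _ h

/-- Key combinatorial induction: if `T` has `2m` points and each line through `p`
contains at most `m` of them, then there is a degree-`m` form vanishing
on `T` but not at `p`. -/
lemma matching_poly (p : Fin 3 → ℂ) :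
    ∀ (m : ℕ) (T : Finset (Fin 3 → ℂ)),
      T.card = 2 * m →
      (∀ q ∈ T, ∀ s ∈ T, ∀ t ∈ T, det3 p q s = 0 → det3 p q t = 0 → det3 p s t = 0) →
      (∀ q ∈ T, (classOf p T q).card ≤ m) →
      ∃ f : MvPolynomial (Fin 3) ℂ, f.IsHomogeneous m ∧ (∀ q ∈ T, eval q f = 0)
        ∧ eval p f ≠ 0 := by
  intro m
  induction m with
  | zero =>
    intro T hT _ _
    refine ⟨1, isHomogeneous_one _ _, ?_, by simp⟩
    intro q hq
    rw [Finset.card_eq_zero.mp (by omega : T.card = 0)] at hq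
    exact absurd hq (Finset.notMem_empty q)
  | succ m ih =>
    intro T hT htrans hbound
    have hTne : T.Nonempty := Finset.card_pos.mp (by omega)
    obtain ⟨q, hqT, hqmax⟩ := Finset.exists_max_image T (fun q => (classOf p T q).card) hTne
    have hqCq : q ∈ classOf p T q := mem_classOf.mpr ⟨hqT, det3_self_last _ _⟩
    have hdiffne : (T \ classOf p T q).Nonempty := by
      rw [← Finset.card_pos, Finset.card_sdiff_of_subset classOf_subset]
      have := hbound q hqT
      omega
    obtain ⟨r, hrmem, hrmax⟩ :=
      Finset.exists_max_image (T \ classOf p T q) (fun s => (classOf p T s).card) hdiffne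
    obtain ⟨hrT, hrnC⟩ := Finset.mem_sdiff.mp hrmem
    have hqr : det3 p q r ≠ 0 := fun h => hrnC (mem_classOf.mpr ⟨hrT, h⟩)
    have hqner : q ≠ r := fun h => hqr (by rw [h]; exact det3_self_last p r)
    set T' : Finset (Fin 3 → ℂ) := (T.erase q).erase r with hT'
    have hT'sub : T' ⊆ T := (Finset.erase_subset _ _).trans (Finset.erase_subset _ _)
    have hrTq : r ∈ T.erase q := Finset.mem_erase.mpr ⟨fun h => hqner h.symm, hrT⟩
    have hT'card : T'.card = 2 * m := by
      rw [hT', Finset.card_erase_of_mem hrTq, Finset.card_erase_of_mem hqT]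
      omega
    have hmemT' : ∀ u, u ∈ T' ↔ (u ∈ T ∧ u ≠ q ∧ u ≠ r) := by
      intro u
      simp only [hT', Finset.mem_erase]
      tauto
    -- the new class bound
    have hbound' : ∀ s ∈ T', (classOf p T' s).card ≤ m := by
      intro s hsT'
      by_contra hcon
      push_neg at hcon
      obtain ⟨hsT, hsq, hsr⟩ := (hmemT' s).mp hsT'
      have hsub : classOf p T' s ⊆ classOf p T s := classOf_mono hT'sub
      -- q and r are not in the `T`-class of s
      have hqnCs : q ∉ classOf p T s := by
        intro hqCs
        have hss : classOf p T' s ⊆ (classOf p T s).erase q := by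
          intro u hu
          refine Finset.mem_erase.mpr ⟨((hmemT' u).mp (classOf_subset hu)).2.1, hsub hu⟩
        have hle := Finset.card_le_card hss
        rw [Finset.card_erase_of_mem hqCs] at hle
        have := hbound s hsT
        omega
      have hrnCs : r ∉ classOf p T s := by
        intro hrCs
        have hss : classOf p T' s ⊆ (classOf p T s).erase r := by
          intro u hu
          refine Finset.mem_erase.mpr ⟨((hmemT' u).mp (classOf_subset hu)).2.2, hsub hu⟩
        have hle := Finset.card_le_card hss
        rw [Finset.card_erase_of_mem hrCs] at hle
        have := hbound s hsT
        omega
      have hsq' : det3 p s q ≠ 0 := fun h => hqnCs (mem_classOf.mpr ⟨hqT, h⟩)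
      have hsr' : det3 p s r ≠ 0 := fun h => hrnCs (mem_classOf.mpr ⟨hrT, h⟩)
      -- s is not in the class of q, so it competed with r
      have hsnCq : s ∉ classOf p T q := by
        intro hsCq
        have h1 : det3 p q s = 0 := (mem_classOf.mp hsCq).2
        exact hsq' (det3_swap_zero h1)
      have hsCscard : m + 1 ≤ (classOf p T s).card :=
        le_trans hcon (Finset.card_le_card hsub)
      have hCr : m + 1 ≤ (classOf p T r).card :=
        le_trans hsCscard (hrmax s (Finset.mem_sdiff.mpr ⟨hsT, hsnCq⟩))
      have hCq : m + 1 ≤ (classOf p T q).card := le_trans hsCscard (hqmax s hsT)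
      -- pairwise disjointness of the three classes
      have hdisjqr : Disjoint (classOf p T q) (classOf p T r) := by
        rw [Finset.disjoint_left]
        intro t htq htr
        have h1 : det3 p q t = 0 := (mem_classOf.mp htq).2
        have h2 : det3 p r t = 0 := (mem_classOf.mp htr).2
        have htT : t ∈ T := (mem_classOf.mp htq).1
        have h1' : det3 p t q = 0 := det3_swap_zero h1
        have h2' : det3 p t r = 0 := det3_swap_zero h2
        exact hqr (htrans t htT q hqT r hrT h1' h2')
      have hdisjqs : Disjoint (classOf p T q) (classOf p T s) := by
        rw [Finset.disjoint_left]
        intro t htq hts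
        have h1 : det3 p q t = 0 := (mem_classOf.mp htq).2
        have h2 : det3 p s t = 0 := (mem_classOf.mp hts).2
        have htT : t ∈ T := (mem_classOf.mp htq).1
        have h1' : det3 p t q = 0 := det3_swap_zero h1
        have h2' : det3 p t s = 0 := det3_swap_zero h2
        have h3 : det3 p q s = 0 := htrans t htT q hqT s hsT h1' h2'
        exact hsnCq (mem_classOf.mpr ⟨hsT, h3⟩)
      have hdisjrs : Disjoint (classOf p T r) (classOf p T s) := by
        rw [Finset.disjoint_left]
        intro t htr hts
        have h1 : det3 p r t = 0 := (mem_classOf.mp htr).2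
        have h2 : det3 p s t = 0 := (mem_classOf.mp hts).2
        have htT : t ∈ T := (mem_classOf.mp htr).1
        have h1' : det3 p t r = 0 := det3_swap_zero h1
        have h2' : det3 p t s = 0 := det3_swap_zero h2
        exact hsr' (det3_swap_zero (htrans t htT r hrT s hsT h1' h2'))
      -- counting
      have hunion : classOf p T q ∪ classOf p T r ∪ classOf p T s ⊆ T := by
        intro u hu
        rcases Finset.mem_union.mp hu with hu | hu
        · rcases Finset.mem_union.mp hu with hu | hu
          · exact classOf_subset hu
          · exact classOf_subset hu
        · exact classOf_subset hu
      have hcardu : (classOf p T q ∪ classOf p T r ∪ classOf p T s).card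
          = (classOf p T q).card + (classOf p T r).card + (classOf p T s).card := by
        rw [Finset.card_union_of_disjoint, Finset.card_union_of_disjoint hdisjqr]
        rw [Finset.disjoint_union_left]
        exact ⟨hdisjqs, hdisjrs⟩
      have := Finset.card_le_card hunion
      omega
    have htrans' : ∀ q' ∈ T', ∀ s ∈ T', ∀ t ∈ T',
        det3 p q' s = 0 → det3 p q' t = 0 → det3 p s t = 0 := by
      intro a ha b hb c hc
      exact htrans a (hT'sub ha) b (hT'sub hb) c (hT'sub hc)
    obtain ⟨f', hf'hom, hf'van, hf'p⟩ := ih T' hT'card htrans' hbound'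
    refine ⟨linePoly q r * f', ?_, ?_, ?_⟩
    · have := (linePoly_homogeneous q r).mul hf'hom
      rwa [Nat.add_comm] at this
    · intro u huT
      rw [map_mul, eval_linePoly]
      by_cases hu1 : u = q
      · rw [hu1, det3_self_mid, zero_mul]
      by_cases hu2 : u = r
      · rw [hu2, det3_self_out, zero_mul]
      · rw [hf'van u ((hmemT' u).mpr ⟨huT, hu1, hu2⟩), mul_zero]
    · rw [map_mul, eval_linePoly]
      exact mul_ne_zero hqr hf'p

lemma degree_eq_sum (d : Fin 3 →₀ ℕ) : d.degree = ∑ i, d i :=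
  Finset.sum_subset (Finset.subset_univ _)
    (fun _ _ hx => Finsupp.notMem_support_iff.mp hx)

noncomputable def degEquiv :
    ↥{d : Fin 3 →₀ ℕ | d.degree = 3} ≃ {v : Fin 3 → ℕ // v ∈ Finset.Nat.antidiagonalTuple 3 3} :=
  Equiv.subtypeEquiv Finsupp.equivFunOnFinite (fun d => by
    rw [Finset.Nat.mem_antidiagonalTuple]
    change d.degree = 3 ↔ _
    rw [degree_eq_sum]
    simp [Finsupp.equivFunOnFinite])

noncomputable instance : Fintype ↥{d : Fin 3 →₀ ℕ | d.degree = 3} :=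
  Fintype.ofEquiv _ degEquiv.symm

lemma finrank_cubics :
    Module.finrank ℂ ↥(homogeneousSubmodule (Fin 3) ℂ 3) = 10 := by
  have hEq : homogeneousSubmodule (Fin 3) ℂ 3
      = MvPolynomial.restrictSupport ℂ {d : Fin 3 →₀ ℕ | d.degree = 3} :=
    homogeneousSubmodule_eq_finsupp_supported (Fin 3) ℂ 3
  rw [hEq, Module.finrank_eq_card_basis (MvPolynomial.basisRestrictSupport ℂ _),
    Fintype.card_congr degEquiv, Fintype.card_coe]
  decide

lemma aeval_eq_eval' (x : Fin 3 → ℂ) (f : MvPolynomial (Fin 3) ℂ) :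
    MvPolynomial.aeval (R := ℂ) x f = eval x f := by
  rw [aeval_def, Algebra.algebraMap_self]
  rfl

end SevenPoints

set_option synthInstance.maxHeartbeats 400000 in
set_option maxHeartbeats 1000000 in
/-- **Seven points in the plane, no five on a line, impose independent conditions on
cubics.** `A` is a set of 7 points of `ℙ²` given by nonzero homogeneous coordinate
vectors, pairwise non-proportional; every line (nonzero linear form) contains at most 4
of them. Then the space of homogeneous cubics vanishing on `A` has dimension
`10 − 7 = 3`, i.e. `h⁰(J_A(3)) = 3`. -/
theorem seven_points_impose_independent_conditions_on_cubics
    (A : Finset (Fin 3 → ℂ)) (hcard : A.card = 7)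
    (hne : ∀ a ∈ A, a ≠ 0)
    (hproj : ∀ a ∈ A, ∀ b ∈ A, a ≠ b → ∀ c : ℂ, a ≠ c • b)
    (hline : ∀ L : MvPolynomial (Fin 3) ℂ, L.IsHomogeneous 1 → L ≠ 0 →
      {a : Fin 3 → ℂ | a ∈ A ∧ MvPolynomial.eval a L = 0}.ncard ≤ 4) :
    Module.finrank ℂ
      ↥((homogeneousSubmodule (Fin 3) ℂ 3) ⊓
        ⨅ a ∈ A, LinearMap.ker (MvPolynomial.aeval (R := ℂ) a).toLinearMap) = 3 := by
  classical
  set V := homogeneousSubmodule (Fin 3) ℂ 3 with hV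
  set K := ⨅ a ∈ A, LinearMap.ker (MvPolynomial.aeval (R := ℂ) a).toLinearMap with hK
  -- Step 1: separating cubics
  have hsep : ∀ a ∈ A, ∃ f : MvPolynomial (Fin 3) ℂ, f.IsHomogeneous 3 ∧
      (∀ b ∈ A, b ≠ a → eval b f = 0) ∧ eval a f ≠ 0 := by
    intro a ha
    have hane : a ≠ 0 := hne a ha
    set T := A.erase a with hT
    have hTcard : T.card = 6 := by rw [hT, Finset.card_erase_of_mem ha, hcard]
    have hindep : ∀ q ∈ T, ∀ c : ℂ, q ≠ c • a := fun q hq =>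
      hproj q (Finset.mem_of_mem_erase hq) a ha (Finset.ne_of_mem_erase hq)
    have htrans : ∀ q ∈ T, ∀ s ∈ T, ∀ t ∈ T,
        det3 a q s = 0 → det3 a q t = 0 → det3 a s t = 0 := by
      intro q hq s hs t ht h1 h2
      obtain ⟨x, hx⟩ := exists_det3_ne hane (hindep q hq)
      exact det3_trans h1 h2 hx
    have hbound : ∀ q ∈ T, (classOf a T q).card ≤ 3 := by
      intro q hq
      have hL := hline (linePoly a q) (linePoly_homogeneous a q)
        (linePoly_ne_zero hane (hindep q hq))
      have hsetEq : {x : Fin 3 → ℂ | x ∈ A ∧ eval x (linePoly a q) = 0}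
          = ↑(A.filter (fun x => eval x (linePoly a q) = 0)) := by
        ext x
        simp [Finset.mem_filter]
      rw [hsetEq, Set.ncard_coe_finset] at hL
      have hsub : insert a (classOf a T q)
          ⊆ A.filter (fun x => eval x (linePoly a q) = 0) := by
        intro u hu
        rcases Finset.mem_insert.mp hu with h | h
        · subst h
          exact Finset.mem_filter.mpr ⟨ha, by rw [eval_linePoly, det3_self_mid]⟩
        · obtain ⟨huT, hdet⟩ := mem_classOf.mp h
          refine Finset.mem_filter.mpr ⟨Finset.mem_of_mem_erase huT, ?_⟩
          rw [eval_linePoly, det3_cyc]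
          exact hdet
      have hanot : a ∉ classOf a T q := fun h =>
        (Finset.notMem_erase a A) (classOf_subset h)
      have hcc := Finset.card_le_card hsub
      rw [Finset.card_insert_of_notMem hanot] at hcc
      omega
    obtain ⟨f, hfh, hfv, hfa⟩ := matching_poly a 3 T (by omega) htrans hbound
    exact ⟨f, hfh, fun b hb hba => hfv b (Finset.mem_erase.mpr ⟨hba, hb⟩), hfa⟩
  -- Step 2: the evaluation map
  let φ : V →ₗ[ℂ] (↥A → ℂ) := LinearMap.pi (fun b : ↥A =>
    ((MvPolynomial.aeval (R := ℂ) (b : Fin 3 → ℂ)).toLinearMap).comp V.subtype)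
  have hφ : ∀ (f : V) (b : ↥A), φ f b = eval (b : Fin 3 → ℂ) (f : MvPolynomial (Fin 3) ℂ) := by
    intro f b
    simp only [φ, LinearMap.pi_apply, LinearMap.comp_apply, Submodule.coe_subtype,
      AlgHom.toLinearMap_apply]
    exact aeval_eq_eval' _ _
  have hker : LinearMap.ker φ = K.comap V.subtype := by
    ext f
    simp only [LinearMap.mem_ker, Submodule.mem_comap, hK, Submodule.mem_iInf,
      LinearMap.mem_ker, AlgHom.toLinearMap_apply]
    constructor
    · intro h a ha
      have := congrFun h ⟨a, ha⟩
      rw [hφ f ⟨a, ha⟩] at this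
      simpa [aeval_eq_eval'] using this
    · intro h
      funext b
      rw [hφ f b]
      have := h (b : Fin 3 → ℂ) b.2
      rw [aeval_eq_eval'] at this
      simpa using this
  have hsurj : Function.Surjective φ := by
    rw [← LinearMap.range_eq_top, eq_top_iff, ← (Pi.basisFun ℂ ↥A).span_eq,
      Submodule.span_le]
    rintro _ ⟨b, rfl⟩
    obtain ⟨f, hfh, hfv, hfb⟩ := hsep (b : Fin 3 → ℂ) b.2
    have hfV : f ∈ V := (mem_homogeneousSubmodule 3 f).mpr hfh
    refine ⟨(eval (b : Fin 3 → ℂ) f)⁻¹ • (⟨f, hfV⟩ : V), ?_⟩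
    funext c
    rw [map_smul]
    simp only [Pi.smul_apply, smul_eq_mul]
    rw [hφ]
    rw [Pi.basisFun_apply]
    by_cases hcb : c = b
    · subst hcb
      simp only [Pi.single_eq_same]
      exact inv_mul_cancel₀ hfb
    · have hcb' : (c : Fin 3 → ℂ) ≠ (b : Fin 3 → ℂ) := fun h => hcb (Subtype.ext h)
      rw [hfv (c : Fin 3 → ℂ) c.2 hcb']
      rw [Pi.single_eq_of_ne hcb]
      ring
  -- Step 3: dimension count
  haveI : FiniteDimensional ℂ ↥(MvPolynomial.restrictSupport ℂ
      {d : Fin 3 →₀ ℕ | d.degree = 3}) :=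
    Module.Finite.of_basis (MvPolynomial.basisRestrictSupport ℂ _)
  haveI hVfd : FiniteDimensional ℂ ↥V := by
    rw [hV, homogeneousSubmodule_eq_finsupp_supported (Fin 3) ℂ 3]
    exact this
  have hrn := LinearMap.finrank_range_add_finrank_ker φ
  have hrange : Module.finrank ℂ ↥(LinearMap.range φ) = 7 := by
    rw [LinearMap.range_eq_top.mpr hsurj, finrank_top]
    rw [Module.finrank_pi ℂ]
    rw [Fintype.card_coe, hcard]
  have hVrank : Module.finrank ℂ ↥V = 10 := finrank_cubics
  have hcomap : (V ⊓ K).comap V.subtype = LinearMap.ker φ := by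
    rw [hker, Submodule.comap_inf, Submodule.comap_subtype_self, top_inf_eq]
  have hequiv := Submodule.comapSubtypeEquivOfLe (inf_le_left : V ⊓ K ≤ V)
  have hfr : Module.finrank ℂ ↥(V ⊓ K) = Module.finrank ℂ ↥(LinearMap.ker φ) := by
    rw [← hcomap]
    exact (LinearEquiv.finrank_eq hequiv).symm
  rw [hfr]
  omega
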